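/- arXiv:2310.06824 — 2 statements merged into one kernel-verified Lean document; each statement's English description precedes it below -/
import Mathlib

section
/- Let X ~ N(θ, I_d) and X' ~ N(-θ, I_d) with θ ≠ 0, and define the population logistic loss L(φ) = (1/2) E[log σ(φᵀX)] + (1/2) E[log(1 - σ(φᵀX'))] over unit vectors φ ∈ ℝ^d. Then L is maximized at φ = θ/‖θ‖. -/
open MeasureTheory Matrix

/-- The logistic sigmoid `σ(t) = 1/(1+e^{-t})`. -/
noncomputable def logistic (t : ℝ) : ℝ := (1 + Real.exp (-t))⁻¹

/-- Density of the multivariate Gaussian `N(μ, Σ)` on `ℝ^d`. -/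
noncomputable def gaussDensity {d : ℕ} (μ : Fin d → ℝ) (S : Matrix (Fin d) (Fin d) ℝ)
    (x : Fin d → ℝ) : ℝ :=
  (Real.sqrt ((2 * Real.pi) ^ d * S.det))⁻¹ *
    Real.exp (-(1/2) * ((x - μ) ⬝ᵥ (S⁻¹ *ᵥ (x - μ))))

open scoped RealInnerProductSpace

namespace LogRegAux

/- ### Scalar facts about the logistic function -/

lemma one_add_exp_pos (t : ℝ) : 0 < 1 + Real.exp (-t) := by positivity

lemma logistic_pos (t : ℝ) : 0 < logistic t := inv_pos.2 (one_add_exp_pos t)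

/-- `log ∘ logistic`. -/
noncomputable def llog (t : ℝ) : ℝ := Real.log (logistic t)

lemma llog_eq (t : ℝ) : Real.log (logistic t) = llog t := rfl

lemma one_sub_logistic_neg (t : ℝ) : 1 - logistic (-t) = logistic t := by
  unfold logistic
  rw [neg_neg]
  have he : Real.exp t ≠ 0 := (Real.exp_pos _).ne'
  have h2 : (0:ℝ) < 1 + Real.exp t := by positivity
  have h1 : (0:ℝ) < 1 + Real.exp (-t) := one_add_exp_pos t
  rw [Real.exp_neg] at h1 ⊢
  field_simp
  ring

lemma llog_mono : Monotone llog := by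
  intro a b hab
  unfold llog
  apply Real.log_le_log (logistic_pos a)
  unfold logistic
  have : Real.exp (-b) ≤ Real.exp (-a) := Real.exp_le_exp.2 (by linarith)
  exact inv_anti₀ (one_add_exp_pos b) (by linarith)

lemma abs_llog_le (t : ℝ) : |llog t| ≤ Real.log 2 + |t| := by
  have h1 : (1:ℝ) ≤ 1 + Real.exp (-t) := by nlinarith [Real.exp_pos (-t)]
  have hlog : llog t = -Real.log (1 + Real.exp (-t)) := by
    unfold llog logistic; rw [Real.log_inv]
  have h2 : 0 ≤ Real.log (1 + Real.exp (-t)) := Real.log_nonneg h1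
  have hle : 1 + Real.exp (-t) ≤ 2 * Real.exp |t| := by
    have e1 : Real.exp (-t) ≤ Real.exp |t| := Real.exp_le_exp.2 (neg_le_abs t)
    have e2 : (1:ℝ) ≤ Real.exp |t| := Real.one_le_exp (abs_nonneg t)
    linarith
  have h3 : Real.log (1 + Real.exp (-t)) ≤ Real.log (2 * Real.exp |t|) :=
    Real.log_le_log (by linarith) hle
  rw [Real.log_mul (by norm_num) (Real.exp_pos _).ne', Real.log_exp] at h3
  rw [hlog, abs_neg, abs_of_nonneg h2]
  exact h3

lemma continuous_llog : Continuous llog := by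
  have h1 : Continuous logistic := by
    apply Continuous.inv₀
    · exact continuous_const.add (Real.continuous_exp.comp continuous_neg)
    · exact fun t => (one_add_exp_pos t).ne'
  exact h1.log fun t => (logistic_pos t).ne'

lemma key_ineq (K t : ℝ) (hK : 0 ≤ K) (ht : 0 ≤ t) :
    (K + t) * Real.exp (-(1/2) * t^2) ≤ (K + 2) * Real.exp (-(1/4) * t^2) := by
  have h1 : Real.exp (-(1/2)*t^2) = Real.exp (-(1/4)*t^2) * Real.exp (-(1/4)*t^2) := by
    rw [← Real.exp_add]; ring_nf
  have hpos : 0 < Real.exp (-(1/4)*t^2) := Real.exp_pos _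
  have h2 : Real.exp (-(1/4)*t^2) ≤ 1 := by
    calc Real.exp (-(1/4)*t^2) ≤ Real.exp 0 := Real.exp_le_exp.2 (by nlinarith)
    _ = 1 := Real.exp_zero
  have h3 : t * Real.exp (-(1/4)*t^2) ≤ 2 := by
    have h4 : t^2/4 + 1 ≤ Real.exp (t^2/4) := Real.add_one_le_exp _
    have h5 : Real.exp (-(1/4)*t^2) = (Real.exp (t^2/4))⁻¹ := by
      rw [← Real.exp_neg]; ring_nf
    have hu : 0 < Real.exp (t^2/4) := Real.exp_pos _
    have huv : (Real.exp (t^2/4))⁻¹ * Real.exp (t^2/4) = 1 := inv_mul_cancel₀ hu.ne'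
    have hvpos : 0 < (Real.exp (t^2/4))⁻¹ := by positivity
    rw [h5]
    nlinarith [sq_nonneg (t - 2)]
  nlinarith [mul_le_mul_of_nonneg_right h3 hpos.le, mul_le_mul_of_nonneg_right h2 hpos.le,
    mul_nonneg hK hpos.le]

/- ### Euclidean-space machinery -/

variable {d : ℕ}

noncomputable def gC (d : ℕ) : ℝ := (Real.sqrt ((2 * Real.pi) ^ d))⁻¹

lemma gC_nonneg (d : ℕ) : 0 ≤ gC d := by unfold gC; positivity

noncomputable def gstd (x : EuclideanSpace ℝ (Fin d)) : ℝ :=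
  gC d * Real.exp (-(1/2) * ⟪x, x⟫)

lemma gstd_nonneg (x : EuclideanSpace ℝ (Fin d)) : 0 ≤ gstd x := by
  unfold gstd gC; positivity

lemma gstd_eq_norm (x : EuclideanSpace ℝ (Fin d)) :
    gstd x = gC d * Real.exp (-(1/2) * ‖x‖^2) := by
  unfold gstd; rw [real_inner_self_eq_norm_sq]

lemma continuous_gstd : Continuous (gstd (d := d)) := by
  unfold gstd
  exact continuous_const.mul (Real.continuous_exp.comp
    (continuous_const.mul (continuous_id.inner continuous_id)))

noncomputable def toE (v : Fin d → ℝ) : EuclideanSpace ℝ (Fin d) :=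
  (WithLp.equiv 2 (Fin d → ℝ)).symm v

lemma inner_toE (v w : Fin d → ℝ) : ⟪toE v, toE w⟫ = v ⬝ᵥ w := by
  simp [toE, PiLp.inner_apply, RCLike.inner_apply, dotProduct, mul_comm]

lemma integral_comp_isometry
    (T : EuclideanSpace ℝ (Fin d) ≃ₗᵢ[ℝ] EuclideanSpace ℝ (Fin d))
    (F : EuclideanSpace ℝ (Fin d) → ℝ) :
    ∫ x, F (T x) = ∫ x, F x :=
  T.measurePreserving.integral_comp T.toHomeomorph.measurableEmbedding F

lemma transport (f : ℝ → ℝ) (ψ μ : Fin d → ℝ) :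
    (∫ x : Fin d → ℝ, f (ψ ⬝ᵥ x) * gaussDensity μ 1 x)
      = ∫ x : EuclideanSpace ℝ (Fin d),
          f ⟪toE ψ, x⟫ * (gC d * Real.exp (-(1/2) * ⟪x - toE μ, x - toE μ⟫)) := by
  rw [← (EuclideanSpace.volume_preserving_symm_measurableEquiv_toLp (Fin d)).integral_comp
      (MeasurableEquiv.measurableEmbedding _)]
  congr 1
  ext x
  have h1 : ψ ⬝ᵥ (MeasurableEquiv.toLp 2 (Fin d → ℝ)).symm x = ⟪toE ψ, x⟫ := by
    simp [MeasurableEquiv.coe_toLp_symm, toE, PiLp.inner_apply, RCLike.inner_apply,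
      dotProduct, mul_comm]
  have h2 : gaussDensity μ 1 ((MeasurableEquiv.toLp 2 (Fin d → ℝ)).symm x)
      = gC d * Real.exp (-(1/2) * ⟪x - toE μ, x - toE μ⟫) := by
    unfold gaussDensity gC
    rw [Matrix.det_one, inv_one, mul_one]
    congr 2
    simp [MeasurableEquiv.coe_toLp_symm, toE, PiLp.inner_apply, RCLike.inner_apply,
      dotProduct, Matrix.one_mulVec, sub_mul, mul_sub, -inner_self_eq_norm_sq_to_K]
  rw [h1, h2]

lemma transl (ψ μ : EuclideanSpace ℝ (Fin d)) :
    (∫ x : EuclideanSpace ℝ (Fin d),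
        llog ⟪ψ, x⟫ * (gC d * Real.exp (-(1/2) * ⟪x - μ, x - μ⟫)))
      = ∫ x : EuclideanSpace ℝ (Fin d), llog (⟪ψ, x⟫ + ⟪ψ, μ⟫) * gstd x := by
  rw [← integral_add_right_eq_self
      (fun x : EuclideanSpace ℝ (Fin d) =>
        llog ⟪ψ, x⟫ * (gC d * Real.exp (-(1/2) * ⟪x - μ, x - μ⟫))) μ]
  congr 1
  ext x
  rw [add_sub_cancel_right, inner_add_right]
  rfl

lemma neg_step (φ θ' : EuclideanSpace ℝ (Fin d)) :
    (∫ x : EuclideanSpace ℝ (Fin d),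
        Real.log (1 - logistic ⟪φ, x⟫) * (gC d * Real.exp (-(1/2) * ⟪x + θ', x + θ'⟫)))
      = ∫ x : EuclideanSpace ℝ (Fin d),
          llog ⟪φ, x⟫ * (gC d * Real.exp (-(1/2) * ⟪x - θ', x - θ'⟫)) := by
  rw [← integral_comp_isometry (LinearIsometryEquiv.neg ℝ (E := EuclideanSpace ℝ (Fin d)))
      (fun x : EuclideanSpace ℝ (Fin d) =>
        Real.log (1 - logistic ⟪φ, x⟫) * (gC d * Real.exp (-(1/2) * ⟪x + θ', x + θ'⟫)))]
  congr 1
  ext x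
  have h1 : ⟪φ, (LinearIsometryEquiv.neg ℝ (E := EuclideanSpace ℝ (Fin d))) x⟫ = -⟪φ, x⟫ := by
    simp [LinearIsometryEquiv.coe_neg, inner_neg_right]
  have h2 : ((LinearIsometryEquiv.neg ℝ (E := EuclideanSpace ℝ (Fin d))) x + θ') = -(x - θ') := by
    simp [LinearIsometryEquiv.coe_neg]; abel
  rw [h1, h2, inner_neg_neg, one_sub_logistic_neg]
  rfl

lemma reflect_step (ψ ψ' : EuclideanSpace ℝ (Fin d)) (h : ‖ψ‖ = ‖ψ'‖) (a : ℝ) :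
    (∫ x : EuclideanSpace ℝ (Fin d), llog (⟪ψ, x⟫ + a) * gstd x)
      = ∫ x : EuclideanSpace ℝ (Fin d), llog (⟪ψ', x⟫ + a) * gstd x := by
  set K := (ℝ ∙ (ψ - ψ'))ᗮ
  have hR : (Submodule.reflection K) ψ = ψ' := Submodule.reflection_sub h
  rw [← integral_comp_isometry (Submodule.reflection K)
      (fun x : EuclideanSpace ℝ (Fin d) => llog (⟪ψ', x⟫ + a) * gstd x)]
  congr 1
  ext x
  have h1 : ⟪ψ', (Submodule.reflection K) x⟫ = ⟪ψ, x⟫ := by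
    have h0 := (Submodule.reflection K).inner_map_map ψ x
    rwa [hR] at h0
  have h2 : gstd ((Submodule.reflection K) x) = gstd x := by
    unfold gstd
    rw [(Submodule.reflection K).inner_map_map x x]
  rw [h1, h2]

lemma integrable_rexp_quarter :
    Integrable (fun x : EuclideanSpace ℝ (Fin d) => Real.exp (-(1/4) * ‖x‖^2)) := by
  have h := (GaussianFourier.integrable_cexp_neg_mul_sq_norm_add
      (V := EuclideanSpace ℝ (Fin d)) (b := (1/4 : ℂ)) (by norm_num) 0 0).norm
  convert h using 2 with x
  have : (-(1/4 : ℂ) * (‖x‖:ℂ)^2 + 0 * (inner ℝ 0 x : ℝ)) = ((-(1/4) * ‖x‖^2 : ℝ) : ℂ) := by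
    push_cast
    ring
  rw [this, Complex.norm_exp, Complex.ofReal_re]

lemma integrable_main (ψ : EuclideanSpace ℝ (Fin d)) (hψ : ‖ψ‖ ≤ 1) (a : ℝ) :
    Integrable (fun x : EuclideanSpace ℝ (Fin d) => llog (⟪ψ, x⟫ + a) * gstd x) := by
  have hcont : Continuous fun x : EuclideanSpace ℝ (Fin d) => llog (⟪ψ, x⟫ + a) * gstd x := by
    exact ((continuous_llog.comp ((continuous_const.inner continuous_id).add
      continuous_const))).mul continuous_gstd
  refine Integrable.mono' ((integrable_rexp_quarter).const_mul
      (gC d * (Real.log 2 + |a| + 2))) hcont.aestronglyMeasurable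
      (Filter.Eventually.of_forall fun x => ?_)
  have hK : (0:ℝ) ≤ Real.log 2 + |a| := by
    have := Real.log_nonneg (by norm_num : (1:ℝ) ≤ 2)
    positivity
  have hs : |⟪ψ, x⟫| ≤ ‖x‖ := by
    calc |⟪ψ, x⟫| ≤ ‖ψ‖ * ‖x‖ := abs_real_inner_le_norm ψ x
    _ ≤ 1 * ‖x‖ := by gcongr
    _ = ‖x‖ := one_mul _
  have hll : |llog (⟪ψ, x⟫ + a)| ≤ Real.log 2 + |a| + ‖x‖ := by
    calc |llog (⟪ψ, x⟫ + a)| ≤ Real.log 2 + |⟪ψ, x⟫ + a| := abs_llog_le _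
    _ ≤ Real.log 2 + (|⟪ψ, x⟫| + |a|) := by gcongr; exact abs_add_le _ _
    _ ≤ Real.log 2 + (‖x‖ + |a|) := by gcongr
    _ = Real.log 2 + |a| + ‖x‖ := by ring
  rw [Real.norm_eq_abs, abs_mul, abs_of_nonneg (gstd_nonneg x), gstd_eq_norm]
  calc |llog (⟪ψ, x⟫ + a)| * (gC d * Real.exp (-(1/2) * ‖x‖^2))
      ≤ (Real.log 2 + |a| + ‖x‖) * (gC d * Real.exp (-(1/2) * ‖x‖^2)) := by
        apply mul_le_mul_of_nonneg_right hll
        have := Real.exp_pos (-(1/2) * ‖x‖^2)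
        have := gC_nonneg d
        positivity
    _ = gC d * ((Real.log 2 + |a| + ‖x‖) * Real.exp (-(1/2) * ‖x‖^2)) := by ring
    _ ≤ gC d * ((Real.log 2 + |a| + 2) * Real.exp (-(1/4) * ‖x‖^2)) := by
        apply mul_le_mul_of_nonneg_left _ (gC_nonneg d)
        exact key_ineq _ _ hK (norm_nonneg x)
    _ = gC d * (Real.log 2 + |a| + 2) * Real.exp (-(1/4) * ‖x‖^2) := by ring

lemma mono_shift (ψ : EuclideanSpace ℝ (Fin d)) (hψ : ‖ψ‖ ≤ 1) {a b : ℝ} (hab : a ≤ b) :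
    (∫ x : EuclideanSpace ℝ (Fin d), llog (⟪ψ, x⟫ + a) * gstd x)
      ≤ ∫ x : EuclideanSpace ℝ (Fin d), llog (⟪ψ, x⟫ + b) * gstd x := by
  refine integral_mono (integrable_main ψ hψ a) (integrable_main ψ hψ b) fun x => ?_
  exact mul_le_mul_of_nonneg_right (llog_mono (by linarith)) (gstd_nonneg x)

end LogRegAux

open LogRegAux

/-- Isotropic case: for `X ~ N(θ, I)` and `X' ~ N(-θ, I)` with `θ ≠ 0`, the population
logistic log-likelihood over unit vectors is maximized at `θ/‖θ‖`. -/
theorem logistic_regression_direction_isotropic {d : ℕ} (θ : Fin d → ℝ) (hθ : θ ≠ 0)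
    (L : (Fin d → ℝ) → ℝ)
    (hL : ∀ φ, L φ =
      (1/2) * (∫ x : Fin d → ℝ, Real.log (logistic (φ ⬝ᵥ x)) * gaussDensity θ 1 x)
      + (1/2) * (∫ x : Fin d → ℝ, Real.log (1 - logistic (φ ⬝ᵥ x)) * gaussDensity (-θ) 1 x)) :
    IsMaxOn L {φ | φ ⬝ᵥ φ = 1} ((Real.sqrt (θ ⬝ᵥ θ))⁻¹ • θ) := by
  intro φ hφ
  simp only [Set.mem_setOf_eq] at hφ
  show L φ ≤ L ((Real.sqrt (θ ⬝ᵥ θ))⁻¹ • θ)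
  set c := Real.sqrt (θ ⬝ᵥ θ) with hc
  set θE := toE θ with hθEdef
  have hθθ : θ ⬝ᵥ θ = ‖θE‖^2 := by
    rw [← inner_toE, real_inner_self_eq_norm_sq]
  have hθE : θE ≠ 0 := by
    intro h0
    apply hθ
    funext i
    have : θE i = 0 := by rw [h0]; rfl
    exact this
  have hnθ : 0 < ‖θE‖ := norm_pos_iff.2 hθE
  have hcval : c = ‖θE‖ := by rw [hc, hθθ, Real.sqrt_sq hnθ.le]
  -- general formula for L
  have key : ∀ ψ : Fin d → ℝ, L ψ
      = ∫ x : EuclideanSpace ℝ (Fin d), llog (⟪toE ψ, x⟫ + ⟪toE ψ, θE⟫) * gstd x := by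
    intro ψ
    rw [hL ψ, transport (fun t => Real.log (logistic t)) ψ θ,
      transport (fun t => Real.log (1 - logistic t)) ψ (-θ)]
    have hm : toE (-θ) = -θE := rfl
    simp only [hm, sub_neg_eq_add, llog_eq]
    rw [neg_step (toE ψ) θE, transl (toE ψ) θE]
    ring
  -- endpoints
  set φstar := (Real.sqrt (θ ⬝ᵥ θ))⁻¹ • θ with hφstardef
  have hφstarE : toE φstar = c⁻¹ • θE := rfl
  have hnφ : ‖toE φ‖ = 1 := by
    have h1 : ⟪toE φ, toE φ⟫ = 1 := by rw [inner_toE]; exact hφ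
    have h2 : ‖toE φ‖^2 = 1 := by rw [← real_inner_self_eq_norm_sq]; exact h1
    nlinarith [norm_nonneg (toE φ)]
  have hnφstar : ‖toE φstar‖ = 1 := by
    rw [hφstarE, norm_smul, norm_inv, Real.norm_eq_abs, hcval, abs_of_pos hnθ]
    exact inv_mul_cancel₀ hnθ.ne'
  have hip : ⟪toE φ, θE⟫ ≤ c := by
    calc ⟪toE φ, θE⟫ ≤ ‖toE φ‖ * ‖θE‖ := real_inner_le_norm _ _
    _ = c := by rw [hnφ, one_mul, hcval]
  have hipstar : ⟪toE φstar, θE⟫ = c := by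
    rw [hφstarE, real_inner_smul_left, real_inner_self_eq_norm_sq, hcval, sq,
      inv_mul_cancel_left₀ hnθ.ne']
  rw [key φ, key φstar, hipstar]
  calc (∫ x : EuclideanSpace ℝ (Fin d), llog (⟪toE φ, x⟫ + ⟪toE φ, θE⟫) * gstd x)
      = ∫ x : EuclideanSpace ℝ (Fin d), llog (⟪toE φstar, x⟫ + ⟪toE φ, θE⟫) * gstd x :=
        reflect_step _ _ (hnφ.trans hnφstar.symm) _
    _ ≤ ∫ x : EuclideanSpace ℝ (Fin d), llog (⟪toE φstar, x⟫ + c) * gstd x :=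
        mono_shift (toE φstar) hnφstar.le hip
end

section
/- Let θ_t, θ_f ∈ ℝ^d be linearly independent unit vectors with θ_tᵀθ_f = ε ∈ (0,1). Consider four points μ_{s,u} = s·θ_t + u·θ_f for s, u ∈ {+1,-1}, with points labeled by the sign of s. Then the maximum-margin separating hyperplane through the origin has normal vector proportional to θ_t - ε θ_f (the component of θ_t orthogonal to θ_f, rescaled), which is not proportional to θ_t; whereas the difference between the mean of the positively labeled points and the mean of the negatively labeled points equals 2θ_t. -/
open Matrix

private lemma dp_self_nonneg {d : ℕ} (x : Fin d → ℝ) : 0 ≤ x ⬝ᵥ x :=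
  Finset.sum_nonneg fun i _ => mul_self_nonneg (x i)

/-- In the four-point configuration `μ_{s,u} = s θ_t + u θ_f` labeled by the sign of `s`, the
maximum-margin unit normal through the origin is the normalization of `θ_t - ε θ_f`, which is
not proportional to `θ_t`, whereas the difference in class means equals `2θ_t`. -/
theorem max_margin_vs_diff_in_means {d : ℕ} (θt θf : Fin d → ℝ) (ε : ℝ)
    (hε : ε ∈ Set.Ioo (0 : ℝ) 1)
    (hlin : LinearIndependent ℝ ![θt, θf])
    (hθt : θt ⬝ᵥ θt = 1) (hθf : θf ⬝ᵥ θf = 1) (hdot : θt ⬝ᵥ θf = ε)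
    (M : (Fin d → ℝ) → ℝ)
    (hM : ∀ φ, M φ = min (min (φ ⬝ᵥ (θt + θf)) (φ ⬝ᵥ (θt - θf)))
        (min (-(φ ⬝ᵥ (-θt + θf))) (-(φ ⬝ᵥ (-θt - θf))))) :
    IsMaxOn M {φ | φ ⬝ᵥ φ = 1}
      ((Real.sqrt ((θt - ε • θf) ⬝ᵥ (θt - ε • θf)))⁻¹ • (θt - ε • θf))
    ∧ (∀ φ ∈ {φ : Fin d → ℝ | φ ⬝ᵥ φ = 1}, IsMaxOn M {φ | φ ⬝ᵥ φ = 1} φ →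
        φ = (Real.sqrt ((θt - ε • θf) ⬝ᵥ (θt - ε • θf)))⁻¹ • (θt - ε • θf))
    ∧ (¬ ∃ c : ℝ,
        (Real.sqrt ((θt - ε • θf) ⬝ᵥ (θt - ε • θf)))⁻¹ • (θt - ε • θf) = c • θt)
    ∧ ((1/2 : ℝ) • ((θt + θf) + (θt - θf)) - (1/2 : ℝ) • ((-θt + θf) + (-θt - θf))
        = (2 : ℝ) • θt) := by
  obtain ⟨hε0, hε1⟩ := hε
  have hdot' : θf ⬝ᵥ θt = ε := by rw [dotProduct_comm]; exact hdot
  set v : Fin d → ℝ := θt - ε • θf with hv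
  have hvt : v ⬝ᵥ θt = 1 - ε ^ 2 := by
    simp only [hv, sub_dotProduct, smul_dotProduct, hθt, hdot', smul_eq_mul]
    ring
  have hvf : v ⬝ᵥ θf = 0 := by
    simp only [hv, sub_dotProduct, smul_dotProduct, hθf, hdot, smul_eq_mul]
    ring
  have hvv : v ⬝ᵥ v = 1 - ε ^ 2 := by
    simp only [hv, dotProduct_sub, dotProduct_smul, smul_eq_mul] at *
    rw [hvt, hvf]; ring
  have hpos : (0 : ℝ) < 1 - ε ^ 2 := by nlinarith
  set s : ℝ := Real.sqrt (v ⬝ᵥ v) with hs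
  have hs2 : s ^ 2 = 1 - ε ^ 2 := by
    rw [hs, Real.sq_sqrt (by rw [hvv]; linarith)]; exact hvv
  have hspos : 0 < s := Real.sqrt_pos.mpr (by rw [hvv]; exact hpos)
  -- M φ in terms of a, b
  have hMab : ∀ φ : Fin d → ℝ, M φ = min (φ ⬝ᵥ (θt + θf)) (φ ⬝ᵥ (θt - θf)) := by
    intro φ
    have h1 : -(φ ⬝ᵥ (-θt + θf)) = φ ⬝ᵥ (θt - θf) := by
      simp [dotProduct_add, dotProduct_sub, dotProduct_neg]; ring
    have h2 : -(φ ⬝ᵥ (-θt - θf)) = φ ⬝ᵥ (θt + θf) := by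
      simp [dotProduct_add, dotProduct_sub, dotProduct_neg]; ring
    rw [hM, h1, h2, min_comm (φ ⬝ᵥ (θt - θf)) (φ ⬝ᵥ (θt + θf)), min_self]
  -- bound M φ ≤ φ ⬝ᵥ v
  have hMv : ∀ φ : Fin d → ℝ, M φ ≤ φ ⬝ᵥ v := by
    intro φ
    have ha : φ ⬝ᵥ (θt + θf) = φ ⬝ᵥ θt + φ ⬝ᵥ θf := by simp [dotProduct_add]
    have hb : φ ⬝ᵥ (θt - θf) = φ ⬝ᵥ θt - φ ⬝ᵥ θf := by simp [dotProduct_sub]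
    have hvd : φ ⬝ᵥ v = φ ⬝ᵥ θt - ε * (φ ⬝ᵥ θf) := by
      simp [hv, dotProduct_sub, dotProduct_smul]
    rw [hMab, ha, hb, hvd]
    rcases le_total (φ ⬝ᵥ θf) 0 with h | h
    · calc min (φ ⬝ᵥ θt + φ ⬝ᵥ θf) (φ ⬝ᵥ θt - φ ⬝ᵥ θf) ≤ φ ⬝ᵥ θt + φ ⬝ᵥ θf :=
            min_le_left _ _
        _ ≤ φ ⬝ᵥ θt - ε * (φ ⬝ᵥ θf) := by nlinarith
    · calc min (φ ⬝ᵥ θt + φ ⬝ᵥ θf) (φ ⬝ᵥ θt - φ ⬝ᵥ θf) ≤ φ ⬝ᵥ θt - φ ⬝ᵥ θf :=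
            min_le_right _ _
        _ ≤ φ ⬝ᵥ θt - ε * (φ ⬝ᵥ θf) := by nlinarith
  -- Cauchy-Schwarz on unit sphere
  have hCS : ∀ φ : Fin d → ℝ, φ ⬝ᵥ φ = 1 →
      φ ⬝ᵥ v ≤ s ∧ (φ ⬝ᵥ v = s → φ = s⁻¹ • v) := by
    intro φ hφ
    have hcomm : v ⬝ᵥ φ = φ ⬝ᵥ v := dotProduct_comm _ _
    have hexp : (s • φ - v) ⬝ᵥ (s • φ - v) = 2 * s * (s - φ ⬝ᵥ v) := by
      simp only [sub_dotProduct, dotProduct_sub, smul_dotProduct, dotProduct_smul,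
        smul_eq_mul, hφ, hcomm, hvv]
      rw [← hs2]; ring
    have h0 : 0 ≤ (s • φ - v) ⬝ᵥ (s • φ - v) := dp_self_nonneg _
    constructor
    · nlinarith
    · intro heq
      have hz : (s • φ - v) ⬝ᵥ (s • φ - v) = 0 := by rw [hexp, heq]; ring
      have hz' : s • φ - v = 0 := dotProduct_self_eq_zero.mp hz
      have : s • φ = v := by rwa [sub_eq_zero] at hz'
      rw [← this, smul_smul, inv_mul_cancel₀ hspos.ne', one_smul]
  -- value at the optimum
  have hstar : M (s⁻¹ • v) = s := by
    have h1 : (s⁻¹ • v) ⬝ᵥ (θt + θf) = s := by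
      simp only [smul_dotProduct, dotProduct_add, smul_eq_mul, hvt, hvf]
      rw [← hs2]
      field_simp
      ring
    have h2 : (s⁻¹ • v) ⬝ᵥ (θt - θf) = s := by
      simp only [smul_dotProduct, dotProduct_sub, smul_eq_mul, hvt, hvf]
      rw [← hs2]
      field_simp
      ring
    rw [hMab, h1, h2, min_self]
  have hstar_mem : (s⁻¹ • v) ⬝ᵥ (s⁻¹ • v) = 1 := by
    simp only [smul_dotProduct, dotProduct_smul, smul_eq_mul, hvv, ← hs2]
    field_simp
  refine ⟨?_, ?_, ?_, ?_⟩
  · intro φ hφ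
    have hφ' : φ ⬝ᵥ φ = 1 := hφ
    have := (hCS φ hφ').1
    have := hMv φ
    simp only [Set.mem_setOf_eq, hstar]
    linarith
  · intro φ hφ hmax
    have hφ' : φ ⬝ᵥ φ = 1 := hφ
    have hge : s ≤ M φ := by
      have h := hmax hstar_mem
      simp only [Set.mem_setOf_eq, hstar] at h
      exact h
    have hle1 := hMv φ
    have hle2 := (hCS φ hφ').1
    exact (hCS φ hφ').2 (le_antisymm hle2 (by linarith))
  · rintro ⟨c, hc⟩
    have hc' : v = (s * c) • θt := by
      have := congrArg (fun x => s • x) hc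
      simpa [smul_smul, mul_inv_cancel₀ hspos.ne'] using this
    have : v ⬝ᵥ θf = (s * c) * ε := by
      rw [hc', smul_dotProduct, hdot, smul_eq_mul]
    rw [hvf] at this
    have hc0 : c = 0 := by
      rcases mul_eq_zero.mp this.symm with h | h
      · rcases mul_eq_zero.mp h with h' | h'
        · exact absurd h' hspos.ne'
        · exact h'
      · exact absurd h hε0.ne'
    rw [hc0] at hc'
    simp only [mul_zero, zero_smul] at hc'
    rw [hc', zero_dotProduct] at hvv
    linarith
  · funext i
    simp only [Pi.sub_apply, Pi.smul_apply, Pi.add_apply, Pi.neg_apply, smul_eq_mul]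
    ring
end
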